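/- Let λ > 0, ε > 0 and n ≥ λ be real numbers. Let γ : [0,1] → ℂ be a continuously differentiable path with Re γ(t) ≥ 0 for all t ∈ [0,1], let k : [0,1] → ℂ satisfy |k(t)| ≤ ε for all t, and let φ : [0,1] → ℂ be differentiable with φ'(t) = −λ·e^{−((n−λ)·γ(t) + φ(t))}·k(t)·γ'(t) for all t ∈ [0,1]. Then for every t ∈ [0,1]: e^{Re φ(0)} − λ·ε·L(t) ≤ e^{Re φ(t)} ≤ e^{Re φ(0)} + λ·ε·L(t), where L(t) = ∫₀^t |γ'(s)| ds is the length of γ restricted to [0,t]. -/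

import Mathlib

open Complex Real Set

/-- The a priori estimate for the quasi-first-integral `φ` of a prepared saddle foliation
along a path `γ` in `{Re z ≥ 0}`: if `φ' = −λ e^{−((n−λ)γ + φ)} k γ'` with `|k| ≤ ε` and
`n ≥ λ`, then `e^{Re φ(0)} − λε·L(t) ≤ e^{Re φ(t)} ≤ e^{Re φ(0)} + λε·L(t)` where `L(t)`
is the arc length of `γ` on `[0,t]`. -/
theorem saddle_quasi_integral_estimate
    (lam ε n : ℝ) (hlam : 0 < lam) (hε : 0 < ε) (hn : lam ≤ n)
    (γ γ' k φ : ℝ → ℂ)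
    (hγ : ∀ t ∈ Icc (0:ℝ) 1, HasDerivAt γ (γ' t) t)
    (hγ'c : ContinuousOn γ' (Icc (0:ℝ) 1))
    (hre : ∀ t ∈ Icc (0:ℝ) 1, 0 ≤ (γ t).re)
    (hk : ∀ t ∈ Icc (0:ℝ) 1, ‖k t‖ ≤ ε)
    (hφ : ∀ t ∈ Icc (0:ℝ) 1,
      HasDerivAt φ (-(lam : ℂ) * Complex.exp (-((((n : ℂ) - lam) * γ t) + φ t)) * k t * γ' t) t) :
    ∀ t ∈ Icc (0:ℝ) 1,
      Real.exp (φ 0).re - lam * ε * (∫ s in (0:ℝ)..t, ‖γ' s‖) ≤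
          Real.exp (φ t).re ∧
        Real.exp (φ t).re ≤
          Real.exp (φ 0).re + lam * ε * (∫ s in (0:ℝ)..t, ‖γ' s‖) := by
  -- ψ = exp ∘ φ
  set ψ : ℝ → ℂ := fun t => Complex.exp (φ t) with hψdef
  have hψ : ∀ t ∈ Icc (0:ℝ) 1,
      HasDerivAt ψ (-(lam : ℂ) * Complex.exp (-(((n : ℂ) - lam) * γ t)) * k t * γ' t) t := by
    intro t ht
    have h1 := (Complex.hasDerivAt_exp (φ t)).comp t (hφ t ht)
    convert h1 using 1
    case e'_4 => rfl
    case e'_8 => rfl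
    have hsplit : Complex.exp (-((((n : ℂ) - lam) * γ t) + φ t)) =
        Complex.exp (-(((n : ℂ) - lam) * γ t)) * Complex.exp (-(φ t)) := by
      rw [← Complex.exp_add]; ring_nf
    have hinv : Complex.exp (-(φ t)) * Complex.exp (φ t) = 1 := by
      rw [← Complex.exp_add]; simp
    simp only [Function.comp, hsplit]
    calc -(lam : ℂ) * Complex.exp (-(((n : ℂ) - lam) * γ t)) * k t * γ' t
        = (-(lam : ℂ) * Complex.exp (-(((n : ℂ) - lam) * γ t)) * k t * γ' t) *
            (Complex.exp (-(φ t)) * Complex.exp (φ t)) := by rw [hinv, mul_one]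
      _ = _ := by ring
  -- the continuous extension of |γ'|
  set g : ℝ → ℝ := fun s => ‖γ' (Set.projIcc (0:ℝ) 1 zero_le_one s)‖ with hgdef
  have hgc : Continuous g := by
    apply continuous_norm.comp
    exact hγ'c.comp_continuous (continuous_subtype_val.comp continuous_projIcc)
      fun x => (Set.projIcc (0:ℝ) 1 zero_le_one x).2
  have hgeq : ∀ t ∈ Icc (0:ℝ) 1,
      (∫ s in (0:ℝ)..t, g s) = ∫ s in (0:ℝ)..t, ‖γ' s‖ := by
    intro t ht
    apply intervalIntegral.integral_congr
    intro s hs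
    rw [Set.uIcc_of_le ht.1] at hs
    have hs' : s ∈ Icc (0:ℝ) 1 := ⟨hs.1, hs.2.trans ht.2⟩
    simp only [hgdef]
    rw [Set.projIcc_of_mem zero_le_one hs']
  set B : ℝ → ℝ := fun x => lam * ε * ∫ s in (0:ℝ)..x, g s with hBdef
  have hB : ∀ x, HasDerivAt B (lam * ε * g x) x := by
    intro x
    exact (hgc.integral_hasStrictDerivAt 0 x).hasDerivAt.const_mul (lam * ε)
  have key : ∀ t ∈ Icc (0:ℝ) 1, ‖ψ t - ψ 0‖ ≤ B t := by
    have hψc : ContinuousOn (fun t => ψ t - ψ 0) (Icc (0:ℝ) 1) := fun t ht =>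
      (((hψ t ht).continuousAt.continuousWithinAt).sub continuousWithinAt_const)
    refine image_norm_le_of_norm_deriv_right_le_deriv_boundary hψc
      (fun x hx => (((hψ x (Ico_subset_Icc_self hx)).sub_const (ψ 0)).hasDerivWithinAt)) ?_ hB ?_
    · simp [hBdef]
    · intro x hx
      have hx' : x ∈ Icc (0:ℝ) 1 := Ico_subset_Icc_self hx
      have h1 : ‖-(lam : ℂ) * Complex.exp (-(((n : ℂ) - lam) * γ x)) * k x * γ' x‖ =
          lam * (‖Complex.exp (-(((n : ℂ) - lam) * γ x))‖ *
            (‖k x‖ * ‖γ' x‖)) := by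
        simp [abs_of_pos hlam, mul_assoc]
      rw [h1]
      have he : ‖Complex.exp (-(((n : ℂ) - lam) * γ x))‖ ≤ 1 := by
        rw [Complex.norm_exp]
        apply Real.exp_le_one_iff.mpr
        have : (-(((n : ℂ) - lam) * γ x)).re = -((n - lam) * (γ x).re) := by
          simp [Complex.sub_re, Complex.mul_re]
        rw [this]
        have := mul_nonneg (sub_nonneg.mpr hn) (hre x hx')
        linarith
      have hgx : g x = ‖γ' x‖ := by
        simp only [hgdef]; rw [Set.projIcc_of_mem zero_le_one hx']
      simp only [hBdef, hgx]
      have h2 : ‖Complex.exp (-(((n : ℂ) - lam) * γ x))‖ *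
          (‖k x‖ * ‖γ' x‖) ≤ 1 * (ε * ‖γ' x‖) := by
        apply mul_le_mul he (by
          exact mul_le_mul_of_nonneg_right (hk x hx') (norm_nonneg _))
          (by positivity) zero_le_one
      calc lam * (‖Complex.exp (-(((n : ℂ) - lam) * γ x))‖ *
            (‖k x‖ * ‖γ' x‖))
          ≤ lam * (1 * (ε * ‖γ' x‖)) :=
            mul_le_mul_of_nonneg_left h2 hlam.le
        _ = lam * ε * ‖γ' x‖ := by ring
  intro t ht
  have hkey := key t ht
  have habs : |‖ψ t‖ - ‖ψ 0‖| ≤ B t := (abs_norm_sub_norm_le _ _).trans hkey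
  have hψt : ‖ψ t‖ = Real.exp (φ t).re := by simp [hψdef, Complex.norm_exp]
  have hψ0 : ‖ψ 0‖ = Real.exp (φ 0).re := by simp [hψdef, Complex.norm_exp]
  have hBval : B t = lam * ε * ∫ s in (0:ℝ)..t, ‖γ' s‖ := by
    simp only [hBdef]; rw [hgeq t ht]
  rw [hψt, hψ0, hBval] at habs
  rw [abs_le] at habs
  constructor <;> linarith [habs.1, habs.2]
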